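/- Let F be a field of characteristic zero with algebraic closure F̄, and let A be an F-subspace of M_n(F) of dimension n−1. Suppose there exist a nonzero linear functional λ₁ on F̄^n and vectors x₁, ..., x_{n−1} ∈ F̄^n with λ₁(x_j) = 0 for all j, such that the rank-one matrices x₁⊗λ₁, ..., x_{n−1}⊗λ₁ (where (x⊗λ)(z) = λ(z)x, i.e., the matrix with (i,j) entry (x)_i λ(e_j)) are linearly independent over F̄ and span the F̄-span of the image of A in M_n(F̄) under the entrywise embedding F → F̄. Then A is F-conjugate to the span of the matrices E_{i,n}, i = 1, ..., n−1: there exists g ∈ GL(n,F) such that g A g^{-1} equals the F-span of {E_{1,n}, ..., E_{n-1,n}}. -/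

import Mathlib

/-- Wallach, case a: Let `A ⊆ Mₙ(F)` be an `F`-subspace of
dimension `n-1` whose `F̄`-span has a basis of rank-one matrices
`x₁⊗λ₁, …, xₙ₋₁⊗λ₁` with `λ₁ ≠ 0` and `λ₁(xⱼ) = 0`.  Then `A` is `F`-conjugate
to the span of the matrices `E_{i,n}`, `i = 1, …, n-1`. -/
theorem stmt14 (F : Type*) [Field F] [CharZero F] (n : ℕ) (hn : 0 < n)
    (A : Submodule F (Matrix (Fin n) (Fin n) F))
    (hdim : Module.finrank F A = n - 1)
    (lam : (Fin n → AlgebraicClosure F) →ₗ[AlgebraicClosure F] AlgebraicClosure F)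
    (hlam : lam ≠ 0)
    (x : Fin (n - 1) → (Fin n → AlgebraicClosure F))
    (hx : ∀ j, lam (x j) = 0)
    (B : Fin (n - 1) → Matrix (Fin n) (Fin n) (AlgebraicClosure F))
    (hB : ∀ j, B j = Matrix.of fun i k => x j i * lam (Pi.single k 1))
    (hind : LinearIndependent (AlgebraicClosure F) B)
    (hspan : Submodule.span (AlgebraicClosure F) (Set.range B)
        = Submodule.span (AlgebraicClosure F)
            ((fun M : Matrix (Fin n) (Fin n) F =>
              M.map (algebraMap F (AlgebraicClosure F))) '' (A : Set (Matrix (Fin n) (Fin n) F)))) :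
    ∃ g : (Matrix (Fin n) (Fin n) F)ˣ,
      (fun a => (↑g : Matrix (Fin n) (Fin n) F) * a * (↑g⁻¹ : Matrix (Fin n) (Fin n) F)) ''
          (A : Set (Matrix (Fin n) (Fin n) F))
        = ↑(Submodule.span F (Set.range fun i : Fin (n - 1) =>
            Matrix.single (Fin.castLE (Nat.sub_le n 1) i) (⟨n - 1, by omega⟩ : Fin n) (1 : F))) := by
  classical
  rcases Nat.lt_or_ge n 2 with hsmall | hn2
  -- Case n = 1
  · have hn1 : n = 1 := by omega
    subst hn1
    have hA : A = ⊥ := Submodule.finrank_eq_zero.mp (by simpa using hdim)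
    refine ⟨1, ?_⟩
    rw [hA]
    have hrange : (Set.range fun i : Fin (1 - 1) =>
        Matrix.single (Fin.castLE (Nat.sub_le 1 1) i) (⟨1 - 1, by omega⟩ : Fin 1) (1 : F))
        = ∅ := by
      ext M
      simp only [Set.mem_range, Set.mem_empty_iff_false, iff_false, not_exists]
      intro i
      exact (Fin.cast (by norm_num : 1 - 1 = 0) i).elim0
    rw [hrange, Submodule.span_empty]
    simp
  -- Main case n ≥ 2
  · have hφ : Function.Injective (algebraMap F (AlgebraicClosure F)) :=
      (algebraMap F (AlgebraicClosure F)).injective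
    obtain ⟨L, hL⟩ : ∃ L : Fin n → AlgebraicClosure F, ∀ k, L k = lam (Pi.single k 1) :=
      ⟨_, fun _ => rfl⟩
    have lam_eq : ∀ z : Fin n → AlgebraicClosure F, lam z = ∑ k, z k * L k := by
      intro z
      conv_lhs => rw [← Finset.univ_sum_single z]
      rw [map_sum]
      refine Finset.sum_congr rfl fun k _ => ?_
      have hsk : (Pi.single k (z k) : Fin n → AlgebraicClosure F)
          = z k • (Pi.single k 1 : Fin n → AlgebraicClosure F) := by
        rw [← Pi.single_smul, smul_eq_mul, mul_one]
      rw [hsk, map_smul, smul_eq_mul, hL]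
    -- every element of A is (over the closure) of the form y ⊗ L with lam y = 0
    have key : ∀ a ∈ A, ∃ y : Fin n → AlgebraicClosure F,
        lam y = 0 ∧ ∀ i k, algebraMap F (AlgebraicClosure F) (a i k) = y i * L k := by
      intro a ha
      have hmem : (a.map (algebraMap F (AlgebraicClosure F)))
          ∈ Submodule.span (AlgebraicClosure F) (Set.range B) := by
        rw [hspan]
        exact Submodule.subset_span ⟨a, ha, rfl⟩
      rw [Submodule.mem_span_range_iff_exists_fun] at hmem
      obtain ⟨t, ht⟩ := hmem
      refine ⟨∑ j, t j • x j, ?_, ?_⟩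
      · rw [map_sum]
        simp [hx]
      · intro i k
        have h2 := congrArg (fun M : Matrix (Fin n) (Fin n) (AlgebraicClosure F) => M i k) ht
        simp only [Matrix.sum_apply, Matrix.smul_apply, Matrix.map_apply, smul_eq_mul,
          hB, Matrix.of_apply] at h2
        have h3 : (∑ j, t j • x j) i * L k = ∑ j, t j * (x j i * lam (Pi.single k 1)) := by
          rw [Finset.sum_apply, Finset.sum_mul]
          refine Finset.sum_congr rfl fun j _ => ?_
          rw [Pi.smul_apply, smul_eq_mul, hL]
          ring
        rw [h3, h2]
    -- a nonzero element of A
    obtain ⟨a₀, ha₀A, ha₀ne⟩ : ∃ a₀ ∈ A, a₀ ≠ 0 := by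
      rcases Submodule.ne_bot_iff A |>.mp (fun h => by
        rw [h] at hdim; simp at hdim; omega) with ⟨a₀, ha₀, hne⟩
      exact ⟨a₀, ha₀, hne⟩
    obtain ⟨y₀, hy₀lam, hy₀⟩ := key a₀ ha₀A
    obtain ⟨i₀, k₁, hik⟩ : ∃ i₀ k₁, a₀ i₀ k₁ ≠ 0 := by
      by_contra hcon
      push_neg at hcon
      exact ha₀ne (by ext i k; simpa using hcon i k)
    have hy₀i₀ : y₀ i₀ ≠ 0 := by
      intro h0
      exact hik (hφ (by rw [hy₀ i₀ k₁, h0, zero_mul, map_zero]))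
    obtain ⟨c, hck₁, hc⟩ : ∃ c : Fin n → F, c k₁ ≠ 0 ∧
        ∀ k, algebraMap F (AlgebraicClosure F) (c k) = y₀ i₀ * L k :=
      ⟨fun k => a₀ i₀ k, hik, fun k => hy₀ i₀ k⟩
    -- every element of A is xv ⊗ c over F with c ⬝ xv = 0
    have hstruct : ∀ a ∈ A, ∃ xv : Fin n → F,
        (∑ i, c i * xv i = 0) ∧ ∀ i k, a i k = xv i * c k := by
      intro a ha
      obtain ⟨y, hylam, hy⟩ := key a ha
      have hii : ∀ i k k', a i k * c k' = a i k' * c k := by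
        intro i k k'
        apply hφ
        rw [map_mul, map_mul, hy, hy, hc, hc]
        ring
      have hi : ∀ k, ∑ i, c i * a i k = 0 := by
        intro k
        apply hφ
        rw [map_sum, map_zero]
        have hterm : ∀ i, algebraMap F (AlgebraicClosure F) (c i * a i k)
            = (y₀ i₀ * L k) * (y i * L i) := by
          intro i
          rw [map_mul, hc, hy]
          ring
        rw [Finset.sum_congr rfl fun i _ => hterm i, ← Finset.mul_sum]
        have hs : ∑ i, y i * L i = 0 := by rw [← lam_eq y]; exact hylam
        rw [hs, mul_zero]
      refine ⟨fun i => a i k₁ * (c k₁)⁻¹, ?_, ?_⟩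
      · have hsum : ∑ i, c i * (a i k₁ * (c k₁)⁻¹) = (∑ i, c i * a i k₁) * (c k₁)⁻¹ := by
          rw [Finset.sum_mul]
          exact Finset.sum_congr rfl fun i _ => by ring
        rw [hsum, hi k₁, zero_mul]
      · intro i k
        have h2 := hii i k k₁
        field_simp
        linear_combination h2
    -- the conjugating matrices
    have hnlt : n - 1 < n := by omega
    set klast : Fin n := ⟨n - 1, hnlt⟩ with hklast
    set σ : Equiv.Perm (Fin n) := Equiv.swap k₁ klast with hσ
    have hσlast : σ klast = k₁ := Equiv.swap_apply_right _ _
    have hσne : ∀ j, j ≠ klast → σ j ≠ k₁ := by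
      intro j hj h
      exact hj (σ.injective (h.trans hσlast.symm))
    obtain ⟨G, hG⟩ : ∃ M : Matrix (Fin n) (Fin n) F, ∀ j i,
        M j i = if j = klast then c i else if i = σ j then 1 else 0 :=
      ⟨Matrix.of _, fun _ _ => rfl⟩
    obtain ⟨H, hH⟩ : ∃ M : Matrix (Fin n) (Fin n) F, ∀ i j,
        M i j = if j = klast then (if i = k₁ then (c k₁)⁻¹ else 0)
          else (if i = σ j then 1 else 0) - (if i = k₁ then c (σ j) * (c k₁)⁻¹ else 0) :=
      ⟨Matrix.of _, fun _ _ => rfl⟩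
    -- key sums
    have hch : ∀ l, (∑ k, c k * H k l) = if l = klast then 1 else 0 := by
      intro l
      by_cases hl : l = klast
      · rw [if_pos hl]
        have hterm : ∀ k, c k * H k l = if k = k₁ then c k * (c k₁)⁻¹ else 0 := by
          intro k
          rw [hH, if_pos hl]
          by_cases hk : k = k₁ <;> simp [hk]
        rw [Finset.sum_congr rfl fun k _ => hterm k,
          Finset.sum_ite_eq' Finset.univ k₁ fun k => c k * (c k₁)⁻¹]
        simp [mul_inv_cancel₀ hck₁]
      · rw [if_neg hl]
        have hterm : ∀ k, c k * H k l
            = (if k = σ l then c k else 0) - (if k = k₁ then c k * (c (σ l) * (c k₁)⁻¹) else 0) := by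
          intro k
          rw [hH, if_neg hl, mul_sub]
          congr 1
          · by_cases hk : k = σ l <;> simp [hk]
          · by_cases hk : k = k₁ <;> simp [hk]
        rw [Finset.sum_congr rfl fun k _ => hterm k, Finset.sum_sub_distrib,
          Finset.sum_ite_eq' Finset.univ (σ l) (fun k => c k),
          Finset.sum_ite_eq' Finset.univ k₁ (fun k => c k * (c (σ l) * (c k₁)⁻¹))]
        simp only [Finset.mem_univ, if_pos]
        field_simp
        ring
    have hrow : ∀ j (v : Fin n → F),
        (∑ i, G j i * v i) = if j = klast then (∑ i, c i * v i) else v (σ j) := by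
      intro j v
      by_cases hj : j = klast
      · rw [if_pos hj]
        exact Finset.sum_congr rfl fun i _ => by rw [hG, if_pos hj]
      · have hterm : ∀ i, G j i * v i = if i = σ j then v i else 0 := by
          intro i
          rw [hG, if_neg hj]
          by_cases hi : i = σ j <;> simp [hi]
        rw [Finset.sum_congr rfl fun i _ => hterm i,
          Finset.sum_ite_eq' Finset.univ (σ j) v, if_neg hj]
        simp
    -- invertibility
    have hinv1 : G * H = 1 := by
      ext j l
      rw [Matrix.mul_apply, hrow j fun i => H i l]
      by_cases hj : j = klast
      · rw [if_pos hj, hch l]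
        by_cases hl : l = klast
        · rw [if_pos hl, hj, hl, Matrix.one_apply_eq]
        · rw [if_neg hl, Matrix.one_apply_ne (by rw [hj]; exact fun h => hl h.symm)]
      · rw [if_neg hj, hH]
        by_cases hl : l = klast
        · rw [if_pos hl, if_neg (hσne j hj), Matrix.one_apply_ne (by rw [hl]; exact hj)]
        · rw [if_neg hl, if_neg (hσne j hj), sub_zero]
          by_cases hjl : j = l
          · rw [if_pos (by rw [hjl]), hjl, Matrix.one_apply_eq]
          · rw [if_neg (fun h => hjl (σ.injective h)), Matrix.one_apply_ne hjl]
    have hinv2 : H * G = 1 := mul_eq_one_comm.mp hinv1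
    -- the conjugation linear map
    set f : Matrix (Fin n) (Fin n) F →ₗ[F] Matrix (Fin n) (Fin n) F :=
      (LinearMap.mulLeft F G).comp (LinearMap.mulRight F H) with hfdef
    have hfapply : ∀ a, f a = G * a * H := by
      intro a
      simp [hfdef, LinearMap.mulLeft_apply, LinearMap.mulRight_apply, mul_assoc]
    set finv : Matrix (Fin n) (Fin n) F →ₗ[F] Matrix (Fin n) (Fin n) F :=
      (LinearMap.mulLeft F H).comp (LinearMap.mulRight F G) with hfinvdef
    have hfinvapply : ∀ a, finv a = H * a * G := by
      intro a
      simp [hfinvdef, LinearMap.mulLeft_apply, LinearMap.mulRight_apply, mul_assoc]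
    have heL1 : f.comp finv = LinearMap.id := by
      apply LinearMap.ext
      intro a
      rw [LinearMap.comp_apply, hfapply, hfinvapply, LinearMap.id_apply]
      calc G * (H * a * G) * H = (G * H) * a * (G * H) := by noncomm_ring
        _ = a := by rw [hinv1, one_mul, mul_one]
    have heL2 : finv.comp f = LinearMap.id := by
      apply LinearMap.ext
      intro a
      rw [LinearMap.comp_apply, hfapply, hfinvapply, LinearMap.id_apply]
      calc H * (G * a * H) * G = (H * G) * a * (H * G) := by noncomm_ring
        _ = a := by rw [hinv2, one_mul, mul_one]
    set eL : Matrix (Fin n) (Fin n) F ≃ₗ[F] Matrix (Fin n) (Fin n) F :=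
      LinearEquiv.ofLinear f finv heL1 heL2 with heLdef
    -- the target family
    set Efam : Fin (n - 1) → Matrix (Fin n) (Fin n) F := fun i =>
      Matrix.single (Fin.castLE (Nat.sub_le n 1) i) klast (1 : F) with hEfam
    -- image is contained in the span
    have himage : ∀ a ∈ A, f a ∈ Submodule.span F (Set.range Efam) := by
      intro a ha
      obtain ⟨xv, hxv0, hxv⟩ := hstruct a ha
      have hfa : ∀ j l, (f a) j l
          = (if j = klast then 0 else xv (σ j)) * (if l = klast then 1 else 0) := by
        intro j l
        rw [hfapply, Matrix.mul_apply]
        have h1 : ∀ k, (G * a) j k = (if j = klast then 0 else xv (σ j)) * c k := by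
          intro k
          rw [Matrix.mul_apply]
          have ht : ∀ i, G j i * a i k = G j i * xv i * c k := by
            intro i; rw [hxv i k]; ring
          rw [Finset.sum_congr rfl fun i _ => ht i, ← Finset.sum_mul]
          congr 1
          rw [hrow j xv]
          by_cases hj : j = klast
          · rw [if_pos hj, if_pos hj, hxv0]
          · rw [if_neg hj, if_neg hj]
        rw [Finset.sum_congr rfl fun k _ => by rw [h1 k]]
        have h2 : ∀ k, (if j = klast then 0 else xv (σ j)) * c k * H k l
            = (if j = klast then 0 else xv (σ j)) * (c k * H k l) := fun k => by ring
        rw [Finset.sum_congr rfl fun k _ => h2 k, ← Finset.mul_sum, hch l]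
      have hsum : f a = ∑ j' : Fin (n - 1), xv (σ (Fin.castLE (Nat.sub_le n 1) j')) • Efam j' := by
        ext j l
        rw [hfa j l, Matrix.sum_apply]
        simp only [hEfam, Matrix.smul_apply, Matrix.single, Matrix.of_apply,
          smul_eq_mul, mul_ite, mul_one, mul_zero]
        by_cases hj : j = klast
        · have hcast : ∀ j' : Fin (n - 1), Fin.castLE (Nat.sub_le n 1) j' ≠ j := by
            intro j' h
            have h2 := congrArg Fin.val h
            have h3 := j'.isLt
            rw [hj] at h2
            simp [hklast] at h2
            omega
          rw [if_pos hj, ite_self,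
            Finset.sum_congr rfl fun j' _ => if_neg (fun hcon => hcast j' hcon.1),
            Finset.sum_const_zero]
        · have hjval : (j : ℕ) < n - 1 := by
            have h1 : (j : ℕ) ≠ n - 1 := fun h => hj (Fin.ext (by rw [h, hklast]))
            have h2 := j.isLt
            omega
          set j₀ : Fin (n - 1) := ⟨(j : ℕ), hjval⟩ with hj₀
          have hj₀cast : Fin.castLE (Nat.sub_le n 1) j₀ = j := Fin.ext rfl
          rw [if_neg hj]
          rw [Finset.sum_eq_single j₀ (fun b _ hb => if_neg (fun hcon =>
            hb (Fin.ext (by simpa [hj₀] using congrArg Fin.val hcon.1))))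
            (fun h => absurd (Finset.mem_univ _) h)]
          rw [hj₀cast]
          by_cases hl : l = klast
          · rw [if_pos hl, if_pos ⟨rfl, hl.symm⟩]
          · rw [if_neg hl, if_neg (fun hcon => hl hcon.2.symm)]
      rw [hsum]
      exact Submodule.sum_mem _ fun j' _ =>
        Submodule.smul_mem _ _ (Submodule.subset_span ⟨j', rfl⟩)
    -- the image submodule equals the span
    have hmaple : A.map f ≤ Submodule.span F (Set.range Efam) := by
      rintro b hb
      rcases Submodule.mem_map.mp hb with ⟨a, ha, rfl⟩
      exact himage a ha
    have hfr1 : Module.finrank F (A.map f) = n - 1 := by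
      have hmap : A.map f = A.map (eL : Matrix (Fin n) (Fin n) F →ₗ[F] Matrix (Fin n) (Fin n) F) :=
        rfl
      rw [hmap, LinearEquiv.finrank_map_eq eL A, hdim]
    have hfr2 : Module.finrank F (Submodule.span F (Set.range Efam)) ≤ n - 1 := by
      simpa [Set.finrank] using finrank_range_le_card Efam
    have heq : A.map f = Submodule.span F (Set.range Efam) :=
      Submodule.eq_of_le_of_finrank_le hmaple (by rw [hfr1]; exact hfr2)
    refine ⟨⟨G, H, hinv1, hinv2⟩, ?_⟩
    show (fun a => G * a * H) '' (A : Set (Matrix (Fin n) (Fin n) F))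
      = ↑(Submodule.span F (Set.range Efam))
    have hfun : (fun a : Matrix (Fin n) (Fin n) F => G * a * H) = ⇑f :=
      funext fun a => (hfapply a).symm
    rw [hfun, ← Submodule.map_coe, heq]
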